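/- arXiv:1606.03029 — 4 statements merged into one kernel-verified Lean document; each statement's English description precedes it below -/
import Mathlib

section
/- Let f: X → X be a measure-preserving map on a probability space (X, B, μ). For any measurable set U ⊆ X and integers n ≥ 1, q ≥ 0, define A_q(U) = U ∩ ⋂_{i=1}^{q} f^{-i}(X \ U) and W_{0,n}(B) = ⋂_{i=0}^{n-1} f^{-i}(X \ B). Then |μ(W_{0,n}(U)) − μ(W_{0,n}(A_q(U)))| ≤ q · μ(U \ A_q(U)). -/
open MeasureTheory ENNReal

theorem stmt0
    {X : Type*} [MeasurableSpace X] (μ : Measure X) [IsProbabilityMeasure μ]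
    (f : X → X) (hf : MeasurePreserving f μ μ)
    (U : Set X) (hU : MeasurableSet U) (n q : ℕ) (hn : 1 ≤ n)
    (A : Set X) (hA : A = U ∩ ⋂ i ∈ Finset.Icc 1 q, (f^[i]) ⁻¹' Uᶜ)
    (W : ℕ → Set X → Set X)
    (hW : ∀ m (B : Set X), W m B = ⋂ i ∈ Finset.range m, (f^[i]) ⁻¹' Bᶜ) :
    |(μ (W n U)).toReal - (μ (W n A)).toReal| ≤ q * (μ (U \ A)).toReal := by
  classical
  have hfm : Measurable f := hf.measurable
  have hAm : MeasurableSet A := by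
    rw [hA]
    refine hU.inter ?_
    exact MeasurableSet.biInter (Finset.Icc 1 q).countable_toSet
      (fun i _ => (hfm.iterate i) hU.compl)
  have hAU : A ⊆ U := by rw [hA]; exact Set.inter_subset_left
  have hWmem : ∀ m B x, x ∈ W m B ↔ ∀ i < m, f^[i] x ∉ B := by
    intro m B x
    simp [hW, Finset.mem_range]
  have hsub : W n U ⊆ W n A := by
    intro x hx
    rw [hWmem] at hx ⊢
    intro i hi hia
    exact hx i hi (hAU hia)
  have hWUm : MeasurableSet (W n U) := by
    rw [hW]
    exact MeasurableSet.biInter (Finset.range n).countable_toSet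
      (fun i _ => (hfm.iterate i) hU.compl)
  have hWAm : MeasurableSet (W n A) := by
    rw [hW]
    exact MeasurableSet.biInter (Finset.range n).countable_toSet
      (fun i _ => (hfm.iterate i) hAm.compl)
  -- key covering
  have key : W n A \ W n U ⊆ ⋃ i ∈ Finset.Ico (n - q) n, f^[i] ⁻¹' (U \ A) := by
    intro x hx
    obtain ⟨hxA, hxU⟩ := hx
    rw [hWmem] at hxA
    have hxU' : ∃ i < n, f^[i] x ∈ U := by
      rw [hWmem] at hxU; push_neg at hxU; exact hxU
    set P : ℕ → Prop := fun i => f^[i] x ∈ U with hP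
    obtain ⟨i0, hi0n, hi0U⟩ := hxU'
    set i := Nat.findGreatest P (n - 1) with hi
    have hi0le : i0 ≤ n - 1 := by omega
    have hiP : P i := Nat.findGreatest_spec hi0le hi0U
    have hilt : i < n := lt_of_le_of_lt (Nat.findGreatest_le (n - 1)) (by omega)
    have hmax : ∀ k, i < k → k ≤ n - 1 → ¬ P k := fun k hk hk' =>
      Nat.findGreatest_is_greatest hk hk'
    have hiA : f^[i] x ∉ A := hxA i hilt
    -- from A's definition, get j ∈ [1,q] with f^[i+j] x ∈ U
    have : ∃ j, 1 ≤ j ∧ j ≤ q ∧ f^[j] (f^[i] x) ∈ U := by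
      rw [hA] at hiA
      simp only [Set.mem_inter_iff, Set.mem_iInter, Set.mem_preimage,
        Set.mem_compl_iff, Finset.mem_Icc, not_and, not_forall] at hiA
      obtain ⟨j, hj, hjU⟩ := hiA hiP
      push_neg at hjU
      exact ⟨j, hj.1, hj.2, hjU⟩
    obtain ⟨j, hj1, hjq, hjU⟩ := this
    have hPij : P (i + j) := by
      rw [hP]
      simpa [Function.iterate_add_apply, Nat.add_comm] using hjU
    have hge : n ≤ i + j := by
      by_contra h
      exact hmax (i + j) (by omega) (by omega) hPij
    have hiq : n - q ≤ i := by omega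
    refine Set.mem_biUnion (Finset.mem_Ico.mpr ⟨hiq, hilt⟩) ?_
    exact ⟨hiP, hiA⟩
  have hmeas : μ (W n A \ W n U) ≤ (q : ℝ≥0∞) * μ (U \ A) := by
    calc μ (W n A \ W n U) ≤ μ (⋃ i ∈ Finset.Ico (n - q) n, f^[i] ⁻¹' (U \ A)) :=
          measure_mono key
      _ ≤ ∑ i ∈ Finset.Ico (n - q) n, μ (f^[i] ⁻¹' (U \ A)) :=
          measure_biUnion_finset_le _ _
      _ = ∑ i ∈ Finset.Ico (n - q) n, μ (U \ A) := by
          refine Finset.sum_congr rfl (fun i _ => ?_)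
          exact (hf.iterate i).measure_preimage (hU.diff hAm).nullMeasurableSet
      _ = ((Finset.Ico (n - q) n).card : ℝ≥0∞) * μ (U \ A) := by
          rw [Finset.sum_const, nsmul_eq_mul]
      _ ≤ (q : ℝ≥0∞) * μ (U \ A) := by
          gcongr
          exact_mod_cast (by rw [Nat.card_Ico]; omega : (Finset.Ico (n - q) n).card ≤ q)
  have hle : μ (W n U) ≤ μ (W n A) := measure_mono hsub
  have hdiff : μ (W n A \ W n U) = μ (W n A) - μ (W n U) :=
    measure_diff hsub hWUm.nullMeasurableSet (measure_ne_top μ _)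
  have hfin : ∀ s : Set X, μ s ≠ ⊤ := fun s => measure_ne_top μ s
  rw [abs_sub_comm, abs_of_nonneg (by
    simp only [sub_nonneg]
    exact ENNReal.toReal_mono (hfin _) hle)]
  have : (μ (W n A)).toReal - (μ (W n U)).toReal = (μ (W n A \ W n U)).toReal := by
    rw [hdiff, ENNReal.toReal_sub_of_le hle (hfin _)]
  rw [this]
  calc (μ (W n A \ W n U)).toReal ≤ ((q : ℝ≥0∞) * μ (U \ A)).toReal :=
        ENNReal.toReal_mono (by
          exact ENNReal.mul_ne_top (by simp) (hfin _)) hmeas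
    _ = q * (μ (U \ A)).toReal := by
        simp [ENNReal.toReal_mul]
end

section
/- Let z = Σ_{i=1}^{∞} (1/3)^{3^i} and, for the doubling-type map f(x) = 3x mod 1 on the circle, let ξ_j = f^{3^j}(z) for j ≥ 1. Then for every j ≥ 1, (1/3)^{2·3^j} ≤ ξ_j ≤ (1/3)^{2·3^j} + (9/8)·(1/3)^{8·3^j}. -/
open Finset

lemma summable_third_pow (g : ℕ → ℕ) (hg : ∀ i, i ≤ g i) :
    Summable (fun i : ℕ => (1/3 : ℝ) ^ g i) := by
  apply Summable.of_nonneg_of_le (fun i => by positivity)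
    (fun i => pow_le_pow_of_le_one (by norm_num) (by norm_num) (hg i))
  exact summable_geometric_of_lt_one (by norm_num) (by norm_num)

lemma iter_fract (f : ℝ → ℝ) (hf : ∀ x, f x = Int.fract (3 * x)) :
    ∀ (n : ℕ) (x : ℝ), f^[n+1] x = Int.fract ((3:ℝ)^(n+1) * x) := by
  intro n
  induction n with
  | zero => intro x; simpa using hf x
  | succ k ih =>
    intro x
    rw [Function.iterate_succ_apply', ih, hf]
    have h : (3:ℝ) * Int.fract ((3:ℝ)^(k+1) * x)
        = (3:ℝ)^(k+2) * x - ((3 * ⌊(3:ℝ)^(k+1) * x⌋ : ℤ) : ℝ) := by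
      rw [Int.fract]; push_cast; ring
    rw [h, Int.fract_sub_intCast]

lemma key1 (n b : ℕ) (h : n ≤ b) : (3:ℝ)^n * (1/3)^b = (1/3)^(b-n) := by
  have h1 : (3:ℝ)^n * (1/3:ℝ)^n = 1 := by rw [← mul_pow]; norm_num
  calc (3:ℝ)^n * (1/3)^b = (1/3)^(b-n) * ((3:ℝ)^n * (1/3)^n) := by
        rw [mul_comm ((1/3:ℝ)^(b-n)), mul_assoc, ← pow_add, Nat.add_sub_cancel' h]
    _ = (1/3)^(b-n) := by rw [h1, mul_one]

lemma key2 (n b : ℕ) (h : b ≤ n) : (3:ℝ)^n * (1/3)^b = ((3^(n-b) : ℕ) : ℝ) := by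
  have h1 : (3:ℝ)^b * (1/3:ℝ)^b = 1 := by rw [← mul_pow]; norm_num
  push_cast
  calc (3:ℝ)^n * (1/3)^b = (3:ℝ)^(n-b) * ((3:ℝ)^b * (1/3)^b) := by
        rw [← mul_assoc, ← pow_add, Nat.sub_add_cancel h]
    _ = (3:ℝ)^(n-b) := by rw [h1, mul_one]

theorem stmt2
    (f : ℝ → ℝ) (hf : ∀ x, f x = Int.fract (3 * x))
    (z : ℝ) (hz : z = ∑' i : ℕ, (1/3 : ℝ) ^ (3 ^ (i + 1)))
    (ξ : ℕ → ℝ) (hξ : ∀ j : ℕ, 1 ≤ j → ξ j = f^[3 ^ j] z) :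
    ∀ j : ℕ, 1 ≤ j →
      (1/3 : ℝ) ^ (2 * 3 ^ j) ≤ ξ j ∧
      ξ j ≤ (1/3 : ℝ) ^ (2 * 3 ^ j) + (9/8 : ℝ) * (1/3 : ℝ) ^ (8 * 3 ^ j) := by
  intro j hj
  set n := 3 ^ j with hn
  have hn3 : 3 ≤ n := by
    calc 3 = 3 ^ 1 := by norm_num
    _ ≤ 3 ^ j := Nat.pow_le_pow_right (by norm_num) hj
  -- e i : exponent of tail terms
  set e : ℕ → ℕ := fun i => 3 ^ (i + j + 1) - 3 ^ j with he
  have hei : ∀ i, i ≤ e i := by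
    intro i
    have h1 : i < 3 ^ i := (Nat.lt_pow_self (by norm_num) : i < 3 ^ i)
    have h2 : 3 ^ i * 3 ^ j = 3 ^ (i + j) := (pow_add 3 i j).symm
    have h3 : 3 ^ (i + j + 1) = 3 * 3 ^ (i + j) := by rw [pow_succ]; ring
    have h4 : 1 ≤ 3 ^ j := Nat.one_le_pow _ _ (by norm_num)
    have h5 : 3 ^ i ≤ 3 ^ (i + j) := Nat.pow_le_pow_right (by norm_num) (Nat.le_add_right _ _)
    have h6 : 3 ^ j ≤ 3 ^ (i + j) := Nat.pow_le_pow_right (by norm_num) (Nat.le_add_left _ _)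
    simp only [he]
    omega
  have he0 : e 0 = 2 * n := by
    simp only [he, hn]
    have : 3 ^ (0 + j + 1) = 3 * 3 ^ j := by rw [Nat.zero_add, pow_succ]; ring
    omega
  have hsummable : Summable (fun i : ℕ => (1/3:ℝ) ^ (3 ^ (i+1))) :=
    summable_third_pow _ (fun i => le_trans (Nat.lt_pow_self (by norm_num) : i < 3 ^ i).le
      (Nat.pow_le_pow_right (by norm_num) (Nat.le_succ i)))
  have hsummul : Summable (fun i : ℕ => (3:ℝ)^n * (1/3:ℝ) ^ (3 ^ (i+1))) :=
    hsummable.mul_left _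
  have hsumt : Summable (fun i : ℕ => (1/3:ℝ) ^ (e i)) := summable_third_pow _ hei
  -- tail sum
  set t : ℝ := ∑' i : ℕ, (1/3:ℝ) ^ (e i) with ht
  -- main decomposition
  set N : ℕ := ∑ i ∈ range j, 3 ^ (n - 3 ^ (i+1)) with hN
  have hdecomp : (3:ℝ)^n * z = (N:ℝ) + t := by
    rw [hz, ← tsum_mul_left, ← hsummul.sum_add_tsum_nat_add j]
    congr 1
    · rw [hN]
      push_cast
      apply Finset.sum_congr rfl
      intro i hi
      have hij : i + 1 ≤ j := Finset.mem_range.mp hi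
      have hb : 3 ^ (i+1) ≤ n := Nat.pow_le_pow_right (by norm_num) hij
      rw [key2 n _ hb]; push_cast; ring
    · rw [ht]
      apply tsum_congr
      intro i
      have hb : n ≤ 3 ^ (i + j + 1) :=
        Nat.pow_le_pow_right (by norm_num) (by omega)
      rw [key1 n _ hb]
  -- bounds on t
  have ht0 : 0 ≤ t := tsum_nonneg (fun i => by positivity)
  have hsplit : t = (1/3:ℝ)^(2*n) + ∑' i : ℕ, (1/3:ℝ)^(e (i+1)) := by
    rw [ht, hsumt.tsum_eq_zero_add, he0]
  have htail_nonneg : 0 ≤ ∑' i : ℕ, (1/3:ℝ)^(e (i+1)) :=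
    tsum_nonneg (fun i => by positivity)
  have hee : ∀ i : ℕ, 8 * n + 2 * i ≤ e (i + 1) := by
    intro i
    have hA : i + 1 ≤ 3 ^ i := (Nat.lt_pow_self (by norm_num) : i < 3 ^ i)
    have hB : 1 ≤ 3 ^ j := Nat.one_le_pow _ _ (by norm_num)
    have h9 : 3 ^ (i + 1 + j + 1) = 9 * (3 ^ i * 3 ^ j) := by
      rw [show i + 1 + j + 1 = i + j + 2 by ring, pow_add, pow_add]; ring
    have hm : 9 * ((i+1) * 3 ^ j) ≤ 9 * (3 ^ i * 3 ^ j) :=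
      Nat.mul_le_mul_left _ (Nat.mul_le_mul_right _ hA)
    have hm2 : i * 1 ≤ i * 3 ^ j := Nat.mul_le_mul_left _ hB
    have hexp : (i+1) * 3 ^ j = i * 3 ^ j + 3 ^ j := by ring
    simp only [he, hn]
    omega
  have hgeom : ∑' i : ℕ, (1/3:ℝ)^(8*n + 2*i) = (1/3:ℝ)^(8*n) * (9/8) := by
    have : ∀ i : ℕ, (1/3:ℝ)^(8*n + 2*i) = (1/3:ℝ)^(8*n) * ((1/9:ℝ))^i := by
      intro i
      rw [pow_add, pow_mul (1/3:ℝ) 2 i]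
      norm_num
    rw [tsum_congr this, tsum_mul_left, tsum_geometric_of_lt_one (by norm_num) (by norm_num)]
    norm_num
  have htail_le : ∑' i : ℕ, (1/3:ℝ)^(e (i+1)) ≤ (9/8:ℝ) * (1/3:ℝ)^(8*n) := by
    have h1 : ∑' i : ℕ, (1/3:ℝ)^(e (i+1)) ≤ ∑' i : ℕ, (1/3:ℝ)^(8*n + 2*i) := by
      apply Summable.tsum_le_tsum
      · intro i
        exact pow_le_pow_of_le_one (by norm_num) (by norm_num) (hee i)
      · exact summable_third_pow _ (fun i => le_trans (Nat.le_succ i) (hei (i+1)))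
      · exact summable_third_pow _ (fun i => by omega)
    rw [hgeom] at h1
    linarith
  have htlt1 : t < 1 := by
    rw [hsplit]
    have h1 : (1/3:ℝ)^(2*n) ≤ (1/3:ℝ)^6 :=
      pow_le_pow_of_le_one (by norm_num) (by norm_num) (by omega)
    have h2 : (1/3:ℝ)^(8*n) ≤ (1/3:ℝ)^24 :=
      pow_le_pow_of_le_one (by norm_num) (by norm_num) (by omega)
    have := htail_le
    norm_num at h1 h2 ⊢
    nlinarith
  -- identify ξ j
  have hξj : ξ j = t := by
    rw [hξ j hj]
    obtain ⟨k, hk⟩ : ∃ k, 3 ^ j = k + 1 := ⟨3 ^ j - 1, by omega⟩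
    rw [hk, iter_fract f hf k z, ← hk]
    show Int.fract ((3:ℝ)^n * z) = t
    rw [hdecomp]
    have : ((N:ℕ):ℝ) = ((N:ℤ):ℝ) := by push_cast; ring
    rw [this, Int.fract_intCast_add, Int.fract_eq_self.mpr ⟨ht0, htlt1⟩]
  rw [hξj]
  constructor
  · rw [hsplit]; linarith
  · rw [hsplit]; linarith
end

section
/- Let z = Σ_{i=1}^{∞} 3^{-3^i}, ξ_0 = z, ξ_j = Σ_{i>j} 3^{3^j − 3^i}. Then the series Σ_{j=1}^{∞} 3^{3^j − 3^{j+1}} · (ξ_j − ξ_{j+2})/2 converges, and the extremal index of Example 1, θ = 1 − (1/z)·( 3^{-3}·(ξ_1 − ξ_2)/2 + Σ_{j=1}^{∞} 3^{3^j − 3^{j+1}} · (ξ_j − ξ_{j+2})/2 ), satisfies 0 < θ < 1. -/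
private lemma aux_pow_lin (k : ℕ) : 2 * k + 1 ≤ 3 ^ k := by
  induction k with
  | zero => simp
  | succ n ih => have h : 3 ^ (n + 1) = 3 * 3 ^ n := by ring
                 omega

private lemma aux_expo (j k : ℕ) : 2 * 3 ^ j + 2 * k ≤ 3 ^ (j + k + 1) - 3 ^ j := by
  have h1 : 2 * k + 1 ≤ 3 ^ k := aux_pow_lin k
  have h2 : 3 ^ (j + k + 1) = 3 ^ j * 3 * 3 ^ k := by ring
  have h3 : 1 ≤ 3 ^ j := Nat.one_le_pow _ _ (by norm_num)
  have hfin : 3 * 3 ^ j + 2 * k ≤ 3 ^ (j + k + 1) := by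
    calc 3 * 3 ^ j + 2 * k ≤ 3 * 3 ^ j * (2 * k + 1) := by nlinarith
      _ ≤ 3 * 3 ^ j * 3 ^ k := Nat.mul_le_mul_left _ h1
      _ = 3 ^ (j + k + 1) := by ring
  omega

private lemma aux_term_le (j k : ℕ) :
    (1/3 : ℝ) ^ (3 ^ (j + k + 1) - 3 ^ j) ≤ (1/3 : ℝ) ^ (2 * 3 ^ j) * (1/9 : ℝ) ^ k := by
  have h := aux_expo j k
  calc (1/3 : ℝ) ^ (3 ^ (j + k + 1) - 3 ^ j)
      ≤ (1/3 : ℝ) ^ (2 * 3 ^ j + 2 * k) :=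
        pow_le_pow_of_le_one (by norm_num) (by norm_num) h
    _ = (1/3 : ℝ) ^ (2 * 3 ^ j) * (1/9 : ℝ) ^ k := by
        rw [pow_add]; norm_num [pow_mul]

private lemma aux_summable (j : ℕ) :
    Summable (fun k : ℕ => (1/3 : ℝ) ^ (3 ^ (j + k + 1) - 3 ^ j)) := by
  refine Summable.of_nonneg_of_le (fun k => by positivity) (aux_term_le j) ?_
  exact (summable_geometric_of_lt_one (by norm_num) (by norm_num)).mul_left _

private lemma aux_xi_le (j : ℕ) :
    (∑' k : ℕ, (1/3 : ℝ) ^ (3 ^ (j + k + 1) - 3 ^ j)) ≤ 2 * (1/3 : ℝ) ^ (2 * 3 ^ j) := by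
  have h1 : (∑' k : ℕ, (1/3 : ℝ) ^ (3 ^ (j + k + 1) - 3 ^ j))
      ≤ ∑' k : ℕ, (1/3 : ℝ) ^ (2 * 3 ^ j) * (1/9 : ℝ) ^ k := by
    refine Summable.tsum_le_tsum (aux_term_le j) (aux_summable j) ?_
    exact (summable_geometric_of_lt_one (by norm_num) (by norm_num)).mul_left _
  have h2 : (∑' k : ℕ, (1/3 : ℝ) ^ (2 * 3 ^ j) * (1/9 : ℝ) ^ k)
      = (1/3 : ℝ) ^ (2 * 3 ^ j) * (1 - 1/9)⁻¹ := by
    rw [tsum_mul_left, tsum_geometric_of_lt_one (by norm_num) (by norm_num)]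
  have h3 : (0:ℝ) < (1/3 : ℝ) ^ (2 * 3 ^ j) := by positivity
  nlinarith [h1, h2, h3]

private lemma aux_xi_ge (j : ℕ) :
    (1/3 : ℝ) ^ (2 * 3 ^ j) ≤ ∑' k : ℕ, (1/3 : ℝ) ^ (3 ^ (j + k + 1) - 3 ^ j) := by
  have h := Summable.le_tsum (aux_summable j) 0 (fun k _ => by positivity)
  have he : 3 ^ (j + 0 + 1) - 3 ^ j = 2 * 3 ^ j := by
    have : 3 ^ (j + 0 + 1) = 3 * 3 ^ j := by ring
    omega
  rwa [he] at h

private lemma aux_xi_pos (j : ℕ) :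
    (0:ℝ) < ∑' k : ℕ, (1/3 : ℝ) ^ (3 ^ (j + k + 1) - 3 ^ j) :=
  lt_of_lt_of_le (by positivity) (aux_xi_ge j)

theorem stmt11
    (z : ℝ) (hz : z = ∑' i : ℕ, (1/3 : ℝ) ^ (3 ^ (i + 1)))
    (ξ : ℕ → ℝ) (hξ0 : ξ 0 = z)
    (hξ : ∀ j : ℕ, 1 ≤ j → ξ j = ∑' k : ℕ, (1/3 : ℝ) ^ (3 ^ (j + k + 1) - 3 ^ j)) :
    Summable (fun k : ℕ =>
      (1/3 : ℝ) ^ (3 ^ (k + 2) - 3 ^ (k + 1)) * (ξ (k + 1) - ξ (k + 3)) / 2) ∧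
    ∀ θ : ℝ,
      θ = 1 - (1 / z) * ((1/3 : ℝ) ^ 3 * (ξ 1 - ξ 2) / 2 +
        ∑' k : ℕ,
          (1/3 : ℝ) ^ (3 ^ (k + 2) - 3 ^ (k + 1)) * (ξ (k + 1) - ξ (k + 3)) / 2) →
      0 < θ ∧ θ < 1 := by
  -- basic facts about ξ for j ≥ 1
  have hub : ∀ j : ℕ, 1 ≤ j → ξ j ≤ 2 * (1/3 : ℝ) ^ (2 * 3 ^ j) := by
    intro j hj; rw [hξ j hj]; exact aux_xi_le j
  have hlb : ∀ j : ℕ, 1 ≤ j → (1/3 : ℝ) ^ (2 * 3 ^ j) ≤ ξ j := by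
    intro j hj; rw [hξ j hj]; exact aux_xi_ge j
  have hpos : ∀ j : ℕ, 1 ≤ j → 0 < ξ j := by
    intro j hj; rw [hξ j hj]; exact aux_xi_pos j
  -- ξ j - ξ (j+2) > 0 for j ≥ 1
  have hdiffpos : ∀ j : ℕ, 1 ≤ j → 0 < ξ j - ξ (j + 2) := by
    intro j hj
    have h1 := hlb j hj
    have h2 := hub (j + 2) (by omega)
    have h3 : 2 * 3 ^ j + 2 ≤ 2 * 3 ^ (j + 2) := by
      have : 3 ^ (j + 2) = 9 * 3 ^ j := by ring
      have h4 : 1 ≤ 3 ^ j := Nat.one_le_pow _ _ (by norm_num)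
      omega
    have h5 : (1/3 : ℝ) ^ (2 * 3 ^ (j + 2)) ≤ (1/3 : ℝ) ^ (2 * 3 ^ j + 2) :=
      pow_le_pow_of_le_one (by norm_num) (by norm_num) h3
    have h6 : (1/3 : ℝ) ^ (2 * 3 ^ j + 2) = (1/3 : ℝ) ^ (2 * 3 ^ j) * (1/9) := by
      rw [pow_add]; norm_num
    have h7 : (0:ℝ) < (1/3 : ℝ) ^ (2 * 3 ^ j) := by positivity
    nlinarith
  -- the exponent in the series
  have hexp : ∀ k : ℕ, 3 ^ (k + 2) - 3 ^ (k + 1) = 2 * 3 ^ (k + 1) := by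
    intro k
    have : 3 ^ (k + 2) = 3 * 3 ^ (k + 1) := by ring
    omega
  -- pointwise bound on the series terms
  have hfnonneg : ∀ k : ℕ,
      0 ≤ (1/3 : ℝ) ^ (3 ^ (k + 2) - 3 ^ (k + 1)) * (ξ (k + 1) - ξ (k + 3)) / 2 := by
    intro k
    have := hdiffpos (k + 1) (by omega)
    have h7 : (0:ℝ) < (1/3 : ℝ) ^ (3 ^ (k + 2) - 3 ^ (k + 1)) := by positivity
    positivity
  have hfle : ∀ k : ℕ,
      (1/3 : ℝ) ^ (3 ^ (k + 2) - 3 ^ (k + 1)) * (ξ (k + 1) - ξ (k + 3)) / 2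
        ≤ (1/3 : ℝ) ^ 12 * (1/3 : ℝ) ^ k := by
    intro k
    have h1 := hub (k + 1) (by omega)
    have h2 := (hpos (k + 3) (by omega)).le
    have h3 : (1/3 : ℝ) ^ (3 ^ (k + 2) - 3 ^ (k + 1)) = (1/3 : ℝ) ^ (2 * 3 ^ (k + 1)) := by
      rw [hexp k]
    have h4 : (0:ℝ) < (1/3 : ℝ) ^ (2 * 3 ^ (k + 1)) := by positivity
    have h5 : (1/3 : ℝ) ^ (3 ^ (k + 2) - 3 ^ (k + 1)) * (ξ (k + 1) - ξ (k + 3)) / 2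
        ≤ (1/3 : ℝ) ^ (2 * 3 ^ (k + 1)) * (1/3 : ℝ) ^ (2 * 3 ^ (k + 1)) := by
      rw [h3]; nlinarith
    have h6 : (1/3 : ℝ) ^ (2 * 3 ^ (k + 1)) * (1/3 : ℝ) ^ (2 * 3 ^ (k + 1))
        = (1/3 : ℝ) ^ (4 * 3 ^ (k + 1)) := by
      rw [← pow_add]; ring_nf
    have h8 : 12 + k ≤ 4 * 3 ^ (k + 1) := by
      have := aux_pow_lin k
      have h9 : 3 ^ (k + 1) = 3 * 3 ^ k := by ring
      omega
    have h10 : (1/3 : ℝ) ^ (4 * 3 ^ (k + 1)) ≤ (1/3 : ℝ) ^ (12 + k) :=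
      pow_le_pow_of_le_one (by norm_num) (by norm_num) h8
    have h11 : (1/3 : ℝ) ^ (12 + k) = (1/3 : ℝ) ^ 12 * (1/3 : ℝ) ^ k := pow_add _ _ _
    linarith [h5, h6.le, h10, h11.le]
  have hgsum : Summable (fun k : ℕ => (1/3 : ℝ) ^ 12 * (1/3 : ℝ) ^ k) :=
    (summable_geometric_of_lt_one (by norm_num) (by norm_num)).mul_left _
  have hsum : Summable (fun k : ℕ =>
      (1/3 : ℝ) ^ (3 ^ (k + 2) - 3 ^ (k + 1)) * (ξ (k + 1) - ξ (k + 3)) / 2) :=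
    Summable.of_nonneg_of_le hfnonneg hfle hgsum
  refine ⟨hsum, ?_⟩
  intro θ hθ
  set S := ∑' k : ℕ,
      (1/3 : ℝ) ^ (3 ^ (k + 2) - 3 ^ (k + 1)) * (ξ (k + 1) - ξ (k + 3)) / 2 with hS
  have hSnonneg : 0 ≤ S := tsum_nonneg hfnonneg
  have hSle : S ≤ (1/3 : ℝ) ^ 12 * (1 - 1/3)⁻¹ := by
    have := Summable.tsum_le_tsum hfle hsum hgsum
    rwa [tsum_mul_left, tsum_geometric_of_lt_one (by norm_num) (by norm_num)] at this
  -- bounds on z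
  have hzsum : Summable (fun i : ℕ => (1/3 : ℝ) ^ (3 ^ (i + 1))) := by
    refine Summable.of_nonneg_of_le (fun i => by positivity) (fun i => ?_)
      ((summable_geometric_of_lt_one (r := (1/3:ℝ)) (by norm_num) (by norm_num)).mul_left (1/3))
    have h1 : i + 1 ≤ 3 ^ (i + 1) := by
      have := aux_pow_lin (i + 1); omega
    calc (1/3 : ℝ) ^ (3 ^ (i + 1)) ≤ (1/3 : ℝ) ^ (i + 1) :=
          pow_le_pow_of_le_one (by norm_num) (by norm_num) h1
      _ = 1/3 * (1/3 : ℝ) ^ i := by rw [pow_succ]; ring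
  have hzlb : (1/3 : ℝ) ^ 3 ≤ z := by
    have h := Summable.le_tsum hzsum 0 (fun i _ => by positivity)
    rw [hz]; simpa using h
  have hzpos : 0 < z := lt_of_lt_of_le (by norm_num) hzlb
  set A := (1/3 : ℝ) ^ 3 * (ξ 1 - ξ 2) / 2 with hA
  have hApos : 0 < A := by
    have h1 := hlb 1 le_rfl
    have h2 := hub 2 (by omega)
    have e1 : 2 * 3 ^ 1 = 6 := by norm_num
    have e2 : 2 * 3 ^ 2 = 18 := by norm_num
    rw [e1] at h1; rw [e2] at h2
    have h6 : 0 < ξ 1 - ξ 2 := by nlinarith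
    have h7 : (0:ℝ) < (1/3 : ℝ) ^ 3 := by norm_num
    rw [hA]
    nlinarith
  have hAle : A ≤ (1/3 : ℝ) ^ 9 := by
    have h1 := hub 1 le_rfl
    have h2 := (hpos 2 (by omega)).le
    have h3 : 2 * 3 ^ 1 = 6 := by norm_num
    rw [h3] at h1
    rw [hA]
    nlinarith [h1, h2]
  have hASlt : A + S < z := by
    have h1 : A + S ≤ (1/3 : ℝ) ^ 9 + (1/3 : ℝ) ^ 12 * (1 - 1/3)⁻¹ := by linarith
    have h2 : (1/3 : ℝ) ^ 9 + (1/3 : ℝ) ^ 12 * (1 - 1/3)⁻¹ < (1/3 : ℝ) ^ 3 := by norm_num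
    linarith
  have hASpos : 0 < A + S := by linarith
  have hfrac : (1 / z) * (A + S) = (A + S) / z := by ring
  constructor
  · rw [hθ]
    have : (A + S) / z < 1 := (div_lt_one hzpos).mpr hASlt
    rw [hfrac]; linarith
  · rw [hθ, hfrac]
    have : 0 < (A + S) / z := div_pos hASpos hzpos
    linarith
end

section
/- In Example 2, let θ_n = 1 − [ 3^{-1}(ξ_{N(n)+1} + e^{-u_n}) + 2 e^{-u_n} Σ_{j=0}^{J(n)} 3^{3^j − 3^{j+1}} ] / [ (ξ_{N(n)+1} + e^{-u_n}) + 2 e^{-u_n}(N(n)+1) ], where J(n) = max{ j : 3^j ≤ N(n) }, ξ_j as before, u_n → ∞, N(n) = max{j : ξ_j − ξ_{j+1} ≥ 2e^{-u_n}} → ∞. Then θ_n → 1 as n → ∞. -/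
open Filter

private lemma exp_bound' (j k : ℕ) : 2*3^j + k ≤ 3^(j+k+1) - 3^j := by
  have hA : 1 ≤ 3^j := Nat.one_le_pow _ _ (by norm_num)
  have hk : k < 3^k := Nat.lt_pow_self (by norm_num)
  have hD : (3:ℕ)^(j+k+1) = 3*3^j*3^k := by ring
  have h : 3*3^j + k ≤ 3^(j+k+1) := by rw [hD]; nlinarith
  omega

private lemma summable_a (j : ℕ) :
    Summable (fun k : ℕ => (1/3:ℝ)^(3^(j+k+1) - 3^j)) := by
  apply Summable.of_nonneg_of_le (fun k => by positivity) (fun k => ?_)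
    ((summable_geometric_of_lt_one (by norm_num) (by norm_num : (1/3:ℝ) < 1)).mul_left
      ((1/3:ℝ)^(2*3^j)))
  calc (1/3:ℝ)^(3^(j+k+1) - 3^j) ≤ (1/3)^(2*3^j + k) :=
        pow_le_pow_of_le_one (by norm_num) (by norm_num) (exp_bound' j k)
    _ = (1/3:ℝ)^(2*3^j) * (1/3)^k := by rw [pow_add]

private lemma tsum_lb (j : ℕ) :
    (1/3:ℝ)^(2*3^j) ≤ ∑' k : ℕ, (1/3:ℝ)^(3^(j+k+1) - 3^j) := by
  have h0 : (1/3:ℝ)^(3^(j+0+1) - 3^j) = (1/3)^(2*3^j) := by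
    congr 1
    have : (3:ℕ)^(j+0+1) = 3*3^j := by ring
    omega
  calc (1/3:ℝ)^(2*3^j) = (1/3:ℝ)^(3^(j+0+1) - 3^j) := h0.symm
    _ ≤ _ := Summable.le_tsum (summable_a j) 0 (fun k _ => by positivity)

private lemma tsum_ub (j : ℕ) :
    (∑' k : ℕ, (1/3:ℝ)^(3^(j+k+1) - 3^j)) ≤ 2 * (1/3:ℝ)^(2*3^j) := by
  have hg : Summable (fun k : ℕ => (1/3:ℝ)^(2*3^j) * (1/3)^k) :=
    (summable_geometric_of_lt_one (by norm_num) (by norm_num)).mul_left _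
  have h1 : (∑' k : ℕ, (1/3:ℝ)^(3^(j+k+1) - 3^j))
      ≤ ∑' k : ℕ, (1/3:ℝ)^(2*3^j) * (1/3)^k := by
    refine Summable.tsum_le_tsum (fun k => ?_) (summable_a j) hg
    calc (1/3:ℝ)^(3^(j+k+1) - 3^j) ≤ (1/3)^(2*3^j + k) :=
          pow_le_pow_of_le_one (by norm_num) (by norm_num) (exp_bound' j k)
      _ = (1/3:ℝ)^(2*3^j) * (1/3)^k := by rw [pow_add]
  have h2 : (∑' k : ℕ, (1/3:ℝ)^(2*3^j) * (1/3)^k)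
      = (1/3:ℝ)^(2*3^j) * (1 - 1/3)⁻¹ := by
    rw [tsum_mul_left, tsum_geometric_of_lt_one (by norm_num) (by norm_num)]
  have h3 : (0:ℝ) ≤ (1/3:ℝ)^(2*3^j) := by positivity
  calc _ ≤ (1/3:ℝ)^(2*3^j) * (1 - 1/3)⁻¹ := h1.trans h2.le
    _ ≤ 2 * (1/3:ℝ)^(2*3^j) := by nlinarith

theorem stmt14
    (z : ℝ) (hz : z = ∑' i : ℕ, (1/3 : ℝ) ^ (3 ^ (i + 1)))
    (ξ : ℕ → ℝ) (hξ0 : ξ 0 = z)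
    (hξ : ∀ j : ℕ, 1 ≤ j → ξ j = ∑' k : ℕ, (1/3 : ℝ) ^ (3 ^ (j + k + 1) - 3 ^ j))
    (u : ℕ → ℝ) (hu : Tendsto u atTop atTop)
    (N : ℕ → ℕ)
    (hN : ∀ n, 2 * Real.exp (-u n) ≤ ξ (N n) - ξ (N n + 1) ∧
      ∀ j : ℕ, 2 * Real.exp (-u n) ≤ ξ j - ξ (j + 1) → j ≤ N n)
    (hNinf : Tendsto N atTop atTop)
    (J : ℕ → ℕ)
    (hJ : ∀ n, 3 ^ (J n) ≤ N n ∧ ∀ j : ℕ, 3 ^ j ≤ N n → j ≤ J n)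
    (θ : ℕ → ℝ)
    (hθ : ∀ n, θ n = 1 -
      ((1/3 : ℝ) * (ξ (N n + 1) + Real.exp (-u n)) +
        2 * Real.exp (-u n) * ∑ j ∈ Finset.range (J n + 1),
          (1/3 : ℝ) ^ (3 ^ (j + 1) - 3 ^ j)) /
      ((ξ (N n + 1) + Real.exp (-u n)) +
        2 * Real.exp (-u n) * ((N n : ℝ) + 1))) :
    Tendsto θ atTop (nhds 1) := by
  -- bounds on ξ for j ≥ 1
  have hle : ∀ j : ℕ, 1 ≤ j → ξ j ≤ 2 * (1/3:ℝ)^(2*3^j) := fun j hj => by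
    rw [hξ j hj]; exact tsum_ub j
  have hge : ∀ j : ℕ, 1 ≤ j → (1/3:ℝ)^(2*3^j) ≤ ξ j := fun j hj => by
    rw [hξ j hj]; exact tsum_lb j
  -- the fraction
  set f : ℕ → ℝ := fun n =>
      ((1/3 : ℝ) * (ξ (N n + 1) + Real.exp (-u n)) +
        2 * Real.exp (-u n) * ∑ j ∈ Finset.range (J n + 1),
          (1/3 : ℝ) ^ (3 ^ (j + 1) - 3 ^ j)) /
      ((ξ (N n + 1) + Real.exp (-u n)) +
        2 * Real.exp (-u n) * ((N n : ℝ) + 1)) with hf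
  have key : ∀ n, 0 ≤ f n ∧ f n ≤ 3 / ((N n : ℝ) + 1) := by
    intro n
    set e := Real.exp (-u n) with he
    have hepos : 0 < e := Real.exp_pos _
    set j := N n + 1 with hjdef
    have hj1 : 1 ≤ j := Nat.le_add_left _ _
    have hj1' : 1 ≤ j + 1 := by omega
    -- gap at j is < 2e by maximality of N n
    have hgap : ξ j - ξ (j+1) < 2 * e := by
      by_contra h
      push_neg at h
      have := (hN n).2 j h
      omega
    -- ξ j ≤ 4 * gap
    have hP : (0:ℝ) ≤ (1/3:ℝ)^(2*3^j) := by positivity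
    have hsmall : 2 * (1/3:ℝ)^(2*3^(j+1)) ≤ (1/2) * (1/3:ℝ)^(2*3^j) := by
      have h1 : (2:ℕ)*3^(j+1) = 2*3^j + 4*3^j := by ring
      have h2 : (1/3:ℝ)^(2*3^(j+1)) = (1/3:ℝ)^(2*3^j) * (1/3:ℝ)^(4*3^j) := by
        rw [h1, pow_add]
      have h3 : (1/3:ℝ)^(4*3^j) ≤ (1/3:ℝ)^4 :=
        pow_le_pow_of_le_one (by norm_num) (by norm_num)
          (by nlinarith [Nat.one_le_pow j 3 (by norm_num)])
      have h4 : (0:ℝ) ≤ (1/3:ℝ)^(4*3^j) := by positivity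
      rw [h2]; nlinarith
    have hgap_ge : (1/2) * (1/3:ℝ)^(2*3^j) ≤ ξ j - ξ (j+1) := by
      have := hge j hj1
      have := hle (j+1) hj1'
      linarith
    have hxi_le : ξ j ≤ 4 * (ξ j - ξ (j+1)) := by
      have := hle j hj1
      linarith
    have hxi_lt : ξ j < 8 * e := by linarith
    have hxi_nonneg : 0 ≤ ξ j := le_trans hP (hge j hj1)
    -- sum bound
    have hsum_nonneg : (0:ℝ) ≤ ∑ i ∈ Finset.range (J n + 1),
        (1/3 : ℝ) ^ (3 ^ (i + 1) - 3 ^ i) :=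
      Finset.sum_nonneg fun i _ => by positivity
    have hsum_le : (∑ i ∈ Finset.range (J n + 1),
        (1/3 : ℝ) ^ (3 ^ (i + 1) - 3 ^ i)) ≤ 3/2 := by
      have hterm : ∀ i ∈ Finset.range (J n + 1),
          (1/3 : ℝ) ^ (3 ^ (i + 1) - 3 ^ i) ≤ (1/3:ℝ)^i := by
        intro i _
        apply pow_le_pow_of_le_one (by norm_num) (by norm_num)
        have h1 : (3:ℕ)^(i+1) = 3*3^i := by ring
        have h2 : i < 3^i := Nat.lt_pow_self (by norm_num)
        omega
      calc (∑ i ∈ Finset.range (J n + 1), (1/3 : ℝ) ^ (3 ^ (i + 1) - 3 ^ i))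
          ≤ ∑ i ∈ Finset.range (J n + 1), (1/3:ℝ)^i := Finset.sum_le_sum hterm
        _ ≤ ∑' i : ℕ, (1/3:ℝ)^i := Summable.sum_le_tsum _ (fun i _ => by positivity)
            (summable_geometric_of_lt_one (by norm_num) (by norm_num))
        _ = (1 - 1/3)⁻¹ := tsum_geometric_of_lt_one (by norm_num) (by norm_num)
        _ = 3/2 := by norm_num
    -- numerator and denominator bounds
    have hnum_nonneg : 0 ≤ (1/3 : ℝ) * (ξ j + e) +
        2 * e * ∑ i ∈ Finset.range (J n + 1), (1/3 : ℝ) ^ (3 ^ (i + 1) - 3 ^ i) := by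
      have : 0 ≤ ξ j + e := by linarith
      positivity
    have hnum_le : (1/3 : ℝ) * (ξ j + e) +
        2 * e * (∑ i ∈ Finset.range (J n + 1), (1/3 : ℝ) ^ (3 ^ (i + 1) - 3 ^ i))
        ≤ 6 * e := by nlinarith
    have hden_pos : 0 < (ξ j + e) + 2 * e * ((N n : ℝ) + 1) := by
      have : (0:ℝ) ≤ (N n : ℝ) + 1 := by positivity
      nlinarith
    have hden_ge : 2 * e * ((N n : ℝ) + 1) ≤ (ξ j + e) + 2 * e * ((N n : ℝ) + 1) := by
      linarith
    have hNpos : (0:ℝ) < (N n : ℝ) + 1 := by positivity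
    constructor
    · exact div_nonneg hnum_nonneg hden_pos.le
    · have h6 : f n ≤ 6 * e / (2 * e * ((N n : ℝ) + 1)) := by
        rw [hf]
        exact div_le_div₀ (by positivity) hnum_le (by positivity) hden_ge
      have : 6 * e / (2 * e * ((N n : ℝ) + 1)) = 3 / ((N n : ℝ) + 1) := by
        field_simp
        ring
      linarith [h6, this.ge, this.le]
  -- limit of the bound
  have hg : Tendsto (fun n => 3 / ((N n : ℝ) + 1)) atTop (nhds 0) := by
    have h1 : Tendsto (fun m : ℕ => (3:ℝ) / ((m : ℝ) + 1)) atTop (nhds 0) :=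
      Tendsto.div_atTop tendsto_const_nhds
        (tendsto_atTop_add_const_right _ 1 tendsto_natCast_atTop_atTop)
    exact h1.comp hNinf
  have hf0 : Tendsto f atTop (nhds 0) :=
    squeeze_zero (fun n => (key n).1) (fun n => (key n).2) hg
  have hθf : θ = fun n => 1 - f n := funext fun n => hθ n
  rw [hθf]
  simpa using tendsto_const_nhds.sub hf0
end
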